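/- Let α > 0, κ > 0, β, η ∈ ℝ, a ∈ [0,1] with αa < 1, let g(d) = log(1 + αd) + (καd² − (β+η)d)/(1 + αd) on [−a, 1−a], and let d* be the optimal coordinate increment of Theorem 1 (d* = min{max{d̂,−a},1−a} if 4κ(κ+β+η)+α² > 0 with d̂ = (−α−2κ+√(4κ(κ+β+η)+α²))/(2κα), and d* = −a otherwise). Then g is monotone along the segment from 0 to d* in the direction of the update: if d* ≥ 0 then g is monotone nonincreasing on [0, d*], and if d* ≤ 0 then g is monotone nondecreasing on [d*, 0]; in particular g(d*) ≤ g(0). -/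

import Mathlib

set_option maxHeartbeats 1000000

theorem stmt_5 (α κ β η a : ℝ) (hα : 0 < α) (hκ : 0 < κ)
    (ha : a ∈ Set.Icc (0 : ℝ) 1) (haa : α * a < 1) :
    let g : ℝ → ℝ := fun d => Real.log (1 + α * d) + (κ * α * d ^ 2 - (β + η) * d) / (1 + α * d)
    let dstar : ℝ :=
      if 0 < 4 * κ * (κ + β + η) + α ^ 2 then
        min (max ((-α - 2 * κ + Real.sqrt (4 * κ * (κ + β + η) + α ^ 2)) / (2 * κ * α)) (-a))
          (1 - a)
      else -a
    (0 ≤ dstar → AntitoneOn g (Set.Icc 0 dstar)) ∧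
      (dstar ≤ 0 → MonotoneOn g (Set.Icc dstar 0)) ∧
      g dstar ≤ g 0 := by
  intro g dstar
  obtain ⟨ha0, ha1⟩ := ha
  set Δ : ℝ := 4 * κ * (κ + β + η) + α ^ 2 with hΔdef
  set s : ℝ := Real.sqrt Δ with hsdef
  set dh : ℝ := (-α - 2 * κ + s) / (2 * κ * α) with hdhdef
  -- the derivative of g
  set f' : ℝ → ℝ := fun d =>
    (κ * α ^ 2 * d ^ 2 + α * (α + 2 * κ) * d + (α - β - η)) / (1 + α * d) ^ 2 with hf'def
  have hderiv : ∀ d : ℝ, 0 < 1 + α * d → HasDerivAt g (f' d) d := by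
    intro d hd
    have hne : (1 + α * d) ≠ 0 := ne_of_gt hd
    have h1 : HasDerivAt (fun x : ℝ => 1 + α * x) α d := by
      simpa using ((hasDerivAt_id d).const_mul α).const_add 1
    have hlog : HasDerivAt (fun x : ℝ => Real.log (1 + α * x)) (α / (1 + α * d)) d :=
      h1.log hne
    have hN : HasDerivAt (fun x : ℝ => κ * α * x ^ 2 - (β + η) * x)
        (κ * α * (2 * d) - (β + η)) d := by
      have := ((hasDerivAt_pow 2 d).const_mul (κ * α)).sub ((hasDerivAt_id d).const_mul (β + η))
      rw [show (fun x : ℝ => κ * α * x ^ 2 - (β + η) * x) = ((fun y => κ * α * y ^ 2) - fun y => (β + η) * id y) from by funext x; simp [id]]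
      exact this.congr_deriv (by norm_num)
    have hdiv := hN.div h1 hne
    have := hlog.add hdiv
    refine this.congr_deriv ?_
    rw [hf'def]
    field_simp
    ring
  -- sign identity: f' d = ((2κα d + α + 2κ)^2 - Δ) / (4κ (1+αd)^2)
  have hq : ∀ d : ℝ,
      κ * α ^ 2 * d ^ 2 + α * (α + 2 * κ) * d + (α - β - η)
        = ((2 * κ * α * d + α + 2 * κ) ^ 2 - Δ) / (4 * κ) := by
    intro d
    rw [hΔdef]
    field_simp
    ring
  have hsq : 0 < (2:ℝ) * κ * α := by positivity
  have hbasic : -a ≤ 1 - a := by linarith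
  -- dstar ≥ -a always
  have hdsge : -a ≤ dstar := by
    simp only [dstar]
    split
    · exact le_min (le_max_right _ _) hbasic
    · exact le_refl _
  -- antitone part
  have hAnti : 0 ≤ dstar → AntitoneOn g (Set.Icc 0 dstar) := by
    intro hds
    apply antitoneOn_of_hasDerivWithinAt_nonpos (f' := f') (convex_Icc 0 dstar)
    · intro x hx
      have hx0 : (0:ℝ) ≤ x := hx.1
      exact ((hderiv x (by nlinarith)).continuousAt).continuousWithinAt
    · intro x hx
      rw [interior_Icc] at hx
      exact ((hderiv x (by nlinarith [hx.1])).hasDerivWithinAt)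
    · intro x hx
      rw [interior_Icc] at hx
      obtain ⟨hx0, hx1⟩ := hx
      -- here dstar > 0 so Δ > 0 and dstar ≤ dh
      have hds' : 0 < dstar := lt_trans hx0 hx1
      have hΔpos : 0 < Δ := by
        by_contra h
        simp only [dstar, ← hΔdef, if_neg h] at hds'
        linarith
      have hdsval : dstar = min (max dh (-a)) (1 - a) := by
        simp only [dstar, ← hΔdef, ← hsdef, ← hdhdef, if_pos hΔpos]
      have hmax : max dh (-a) = dh := by
        rcases max_cases dh (-a) with ⟨h1, h2⟩ | ⟨h1, h2⟩
        · exact h1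
        · exfalso
          have : dstar ≤ -a := by rw [hdsval, h1]; exact min_le_left _ _
          linarith
      have hxdh : x < dh := by
        have : dstar ≤ dh := by rw [hdsval, hmax]; exact min_le_left _ _
        linarith
      -- so 2κα x + α + 2κ ≤ s
      have hs0 : 0 ≤ s := Real.sqrt_nonneg _
      have hss : s ^ 2 = Δ := Real.sq_sqrt (le_of_lt hΔpos)
      have hu_le : 2 * κ * α * x + α + 2 * κ ≤ s := by
        have h' : x < (-α - 2 * κ + s) / (2 * κ * α) := by rw [← hdhdef]; exact hxdh
        have := (lt_div_iff₀ hsq).mp h'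
        nlinarith
      have hu_ge : -s ≤ 2 * κ * α * x + α + 2 * κ := by nlinarith
      have hnum : (2 * κ * α * x + α + 2 * κ) ^ 2 - Δ ≤ 0 := by
        nlinarith [sq_le_sq' hu_ge hu_le]
      have hpos : 0 < 1 + α * x := by nlinarith
      rw [hf'def]
      simp only
      rw [hq x]
      apply div_nonpos_of_nonpos_of_nonneg
      · apply div_nonpos_of_nonpos_of_nonneg hnum (by positivity)
      · positivity
  -- monotone part
  have hMono : dstar ≤ 0 → MonotoneOn g (Set.Icc dstar 0) := by
    intro hds
    apply monotoneOn_of_hasDerivWithinAt_nonneg (f' := f') (convex_Icc dstar 0)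
    · intro x hx
      have : -a ≤ x := le_trans hdsge hx.1
      exact ((hderiv x (by nlinarith)).continuousAt).continuousWithinAt
    · intro x hx
      rw [interior_Icc] at hx
      have : -a ≤ x := le_trans hdsge (le_of_lt hx.1)
      exact ((hderiv x (by nlinarith)).hasDerivWithinAt)
    · intro x hx
      rw [interior_Icc] at hx
      obtain ⟨hx0, hx1⟩ := hx
      have hax : -a ≤ x := le_trans hdsge (le_of_lt hx0)
      have hpos : 0 < 1 + α * x := by nlinarith
      have hnum : 0 ≤ (2 * κ * α * x + α + 2 * κ) ^ 2 - Δ := by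
        by_cases hΔpos : 0 < Δ
        · -- dstar ≥ dh in this case (since dstar < 0 rules out dstar = 1 - a unless a = 1...)
          have hdsval : dstar = min (max dh (-a)) (1 - a) := by
            simp only [dstar, ← hΔdef, ← hsdef, ← hdhdef, if_pos hΔpos]
          have hds' : dstar < 0 := lt_trans hx0 hx1
          have hdhds : dh ≤ dstar := by
            rw [hdsval]
            rcases min_cases (max dh (-a)) (1 - a) with ⟨h1, h2⟩ | ⟨h1, h2⟩
            · rw [h1]; exact le_max_left _ _
            · exfalso
              have : dstar = 1 - a := by rw [hdsval, h1]
              have h1a : 0 ≤ 1 - a := by linarith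
              have : (0:ℝ) < 0 := by
                calc (0:ℝ) ≤ 1 - a := h1a
                _ = dstar := this.symm
                _ < 0 := by linarith
              linarith
          have hxdh : dh < x := lt_of_le_of_lt hdhds hx0
          have hs0 : 0 ≤ s := Real.sqrt_nonneg _
          have hss : s ^ 2 = Δ := Real.sq_sqrt (le_of_lt hΔpos)
          have hu_ge : s ≤ 2 * κ * α * x + α + 2 * κ := by
            have h' : (-α - 2 * κ + s) / (2 * κ * α) < x := by rw [← hdhdef]; exact hxdh
            have := (div_lt_iff₀ hsq).mp h'
            nlinarith
          nlinarith
        · push_neg at hΔpos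
          nlinarith
      rw [hf'def]
      simp only
      rw [hq x]
      positivity
  refine ⟨hAnti, hMono, ?_⟩
  rcases le_or_gt 0 dstar with h | h
  · exact hAnti h (Set.left_mem_Icc.mpr h) (Set.right_mem_Icc.mpr h) h
  · exact hMono (le_of_lt h) (Set.left_mem_Icc.mpr (le_of_lt h)) (Set.right_mem_Icc.mpr (le_of_lt h)) (le_of_lt h)
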